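/- Let F = {f_1, …, f_r} be pairwise non-proportional nonzero linear forms in ℂ[x_1, …, x_n]. If the powers f_1^m, …, f_r^m are linearly dependent over ℂ for some integer m ≥ 2, then f_1^{m−1}, …, f_r^{m−1} are also linearly dependent over ℂ. -/

import Mathlib

open MvPolynomial

lemma deg_one_single {n : ℕ} (s : Fin n →₀ ℕ) (hs : s.degree = 1) (i : Fin n)
    (hi : s i ≠ 0) : s = Finsupp.single i 1 := by
  have hmem : i ∈ s.support := Finsupp.mem_support_iff.2 hi
  have h1 : s i ≤ 1 := by
    rw [← hs]
    exact Finset.single_le_sum (fun k _ => Nat.zero_le _) hmem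
  have hsi : s i = 1 := le_antisymm h1 (Nat.one_le_iff_ne_zero.2 hi)
  have hrest : ∑ k ∈ s.support.erase i, s k = 0 := by
    have := Finset.add_sum_erase s.support s hmem
    rw [Finsupp.degree_apply] at hs
    omega
  ext k
  rcases eq_or_ne k i with rfl | hk
  · simp [hsi]
  · rw [Finsupp.single_apply, if_neg (by exact fun h => hk h.symm)]
    by_contra hk0
    have hkmem : k ∈ s.support.erase i := Finset.mem_erase.2 ⟨hk, Finsupp.mem_support_iff.2 hk0⟩
    have := Finset.sum_eq_zero_iff.1 hrest k hkmem
    exact hk0 this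

lemma pderiv_homog_one {n : ℕ} (p : MvPolynomial (Fin n) ℂ) (hp : p.IsHomogeneous 1)
    (i : Fin n) : pderiv i p = C (coeff (Finsupp.single i 1) p) := by
  classical
  conv_lhs => rw [p.as_sum]
  rw [map_sum]
  have : ∀ s ∈ p.support, pderiv i (monomial s (coeff s p))
      = if s = Finsupp.single i 1 then C (coeff s p) else 0 := by
    intro s hs
    have hdeg : s.degree = 1 := by
      have := hp (Finsupp.mem_support_iff.1 hs)
      rwa [Finsupp.degree_eq_weight_one]
    rw [pderiv_monomial]
    split_ifs with h
    · subst h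
      rw [tsub_self, Finsupp.single_eq_same, Nat.cast_one, mul_one, C_apply]
    · have hsi : s i = 0 := by
        by_contra hsi
        exact h (deg_one_single s hdeg i hsi)
      simp [hsi]
  rw [Finset.sum_congr rfl this, Finset.sum_ite_eq' p.support (Finsupp.single i 1)
    (fun s => C (coeff s p))]
  split_ifs with h
  · rfl
  · rw [notMem_support_iff.1 h, map_zero]

theorem stmt5 (r n m : ℕ) (hm : 2 ≤ m) (f : Fin r → MvPolynomial (Fin n) ℂ)
    (hne : ∀ j, f j ≠ 0)
    (hhom : ∀ j, (f j).IsHomogeneous 1)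
    (hprop : ∀ i j, i ≠ j → ∀ c : ℂ, f i ≠ c • f j)
    (hdep : ¬ LinearIndependent ℂ (fun j => f j ^ m)) :
    ¬ LinearIndependent ℂ (fun j => f j ^ (m - 1)) := by
  rw [Fintype.not_linearIndependent_iff] at hdep ⊢
  obtain ⟨g, hg, j0, hj0⟩ := hdep
  -- find a variable i with  coeff (single i 1) (f j0) ≠ 0
  obtain ⟨d, hd⟩ : ∃ d, coeff d (f j0) ≠ 0 := by
    by_contra h
    push_neg at h
    exact hne j0 (MvPolynomial.ext _ _ (by simpa using h))
  have hddeg : d.degree = 1 := by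
    have := hhom j0 hd
    rwa [Finsupp.degree_eq_weight_one]
  have hdne : d ≠ 0 := by
    intro h
    rw [h] at hddeg
    simp [map_zero] at hddeg
  obtain ⟨i, hi⟩ : ∃ i, d i ≠ 0 := by
    by_contra h
    push_neg at h
    exact hdne (Finsupp.ext h)
  have hdsingle : d = Finsupp.single i 1 := deg_one_single d hddeg i hi
  -- apply pderiv i to the relation
  have hder := congrArg (pderiv i) hg
  rw [map_sum, map_zero] at hder
  refine ⟨fun j => g j * (m : ℂ) * coeff (Finsupp.single i 1) (f j), ?_, j0, ?_⟩
  · rw [← hder]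
    apply Finset.sum_congr rfl
    intro j _
    rw [Derivation.map_smul, pderiv_pow, pderiv_homog_one (f j) (hhom j) i]
    rw [smul_eq_C_mul, smul_eq_C_mul, map_mul, map_mul, C_eq_coe_nat]
    ring
  · simp only [ne_eq, mul_eq_zero, not_or]
    refine ⟨⟨hj0, Nat.cast_ne_zero.2 (by omega)⟩, ?_⟩
    rw [← hdsingle]; exact hd
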